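/- The generalization to multiple sensitive features holds: with sensitive block x₀ ∈ ℝ^m and h* separable as g(x₀, K(x₁,...,x_ℓ)) where g : ℝ^m × ℝ → ℝ is strictly increasing in its last argument, for every τ ∈ ℝ the classifier h_τ(x) = h*(0_m, x₁,...,x_ℓ) + τ is EL-fair with respect to h*. -/

import Mathlib

/-- Generalization to multiple sensitive features: with sensitive block in `ℝ^m` and
`hs` separable with `g` strictly increasing in its last argument, every shifted
masked classifier is EL-fair. -/
theorem masked_classifier_EL_fair_multi {m l : ℕ}
    (X : Set ((Fin m → ℝ) × (Fin l → ℝ)))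
    (hs : (Fin m → ℝ) × (Fin l → ℝ) → ℝ)
    (g : (Fin m → ℝ) → ℝ → ℝ) (K : (Fin l → ℝ) → ℝ)
    (hsep : ∀ x ∈ X, hs x = g x.1 (K x.2))
    (hmono : ∀ a, StrictMono (g a))
    (hclosed : ∀ x ∈ X, ((0 : Fin m → ℝ), x.2) ∈ X)
    (τ : ℝ) (hτ : (Fin m → ℝ) × (Fin l → ℝ) → ℝ)
    (hτdef : ∀ x, hτ x = hs (0, x.2) + τ) :
    (∀ x1 ∈ X, ∀ x2 ∈ X, x1.2 = x2.2 → hτ x1 = hτ x2) ∧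
    (∀ x1 ∈ X, ∀ x2 ∈ X, x1.1 = x2.1 →
      (hs x1 = hs x2 → hτ x1 = hτ x2) ∧ (hs x1 > hs x2 → hτ x1 ≥ hτ x2)) := by
  constructor
  · intro x1 _ x2 _ h
    rw [hτdef, hτdef, h]
  · intro x1 hx1 x2 hx2 h1
    have e1 : hs x1 = g x1.1 (K x1.2) := hsep x1 hx1
    have e2 : hs x2 = g x1.1 (K x2.2) := by rw [hsep x2 hx2, h1]
    have f1 : hs (0, x1.2) = g 0 (K x1.2) := hsep _ (hclosed x1 hx1)
    have f2 : hs (0, x2.2) = g 0 (K x2.2) := hsep _ (hclosed x2 hx2)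
    constructor
    · intro h
      have : K x1.2 = K x2.2 := (hmono x1.1).injective (by rw [← e1, ← e2, h])
      rw [hτdef, hτdef, f1, f2, this]
    · intro h
      have : K x2.2 ≤ K x1.2 := by
        by_contra hc
        push_neg at hc
        exact absurd (e1 ▸ e2 ▸ hmono x1.1 hc) (not_lt.mpr h.le)
      rw [hτdef, hτdef, f1, f2]
      exact add_le_add_left ((hmono 0).le_iff_le.mpr this) τ
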